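/- arXiv:1907.00697 — 4 statements merged into one kernel-verified Lean document; each statement's English description precedes it below -/
import Mathlib

section
/- Let B be an m×n random binary matrix with i.i.d. Bernoulli(p) entries, δ ∈ [p,1], 1 ≤ a ≤ n, 1 ≤ b ≤ m. The probability that there exist binary vectors x, y with |x| ≥ a, |y| ≥ b and yᵀBx ≥ δ|x||y| is at most C(n,a)·C(m,b)·exp(−2ab(δ−p)²). -/
open Real

lemma bernoulli_mgf_bound {p : ℝ} (hp0 : 0 ≤ p) (hp1 : p ≤ 1) {t : ℝ} (ht : 0 ≤ t) :
    p * Real.exp t + (1 - p) ≤ Real.exp (p * t + t ^ 2 / 8) := by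
  set D : ℝ → ℝ := fun s => p * Real.exp s + (1 - p) with hDdef
  have hDpos : ∀ s, 0 < D s := by
    intro s
    rcases eq_or_lt_of_le hp0 with h | h
    · simp [hDdef, ← h]
    · have := Real.exp_pos s
      simp only [hDdef]; nlinarith
  have hD : ∀ s, HasDerivAt D (p * Real.exp s) s := by
    intro s
    exact ((Real.hasDerivAt_exp s).const_mul p).add_const (1 - p)
  set g : ℝ → ℝ := fun s => p + s / 4 - p * Real.exp s / D s with hgdef
  -- g is monotone
  have hg : ∀ s, HasDerivAt g (1 / 4 - p * Real.exp s * (1 - p) / (D s) ^ 2) s := by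
    intro s
    have h1 : HasDerivAt (fun s : ℝ => p + s / 4) (1 / 4) s := by
      simpa using ((hasDerivAt_id s).div_const 4).const_add p
    have h2 : HasDerivAt (fun s => p * Real.exp s / D s)
        ((p * Real.exp s * D s - p * Real.exp s * (p * Real.exp s)) / (D s) ^ 2) s :=
      ((Real.hasDerivAt_exp s).const_mul p).div (hD s) (ne_of_gt (hDpos s))
    have h3 := h1.sub h2
    refine h3.congr_deriv ?_
    have hne := ne_of_gt (hDpos s)
    simp only [hDdef]
    ring
  have hgmono : Monotone g := by
    apply monotone_of_deriv_nonneg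
    · intro s; exact (hg s).differentiableAt
    · intro s
      rw [(hg s).deriv]
      have h4 : p * Real.exp s * (1 - p) / (D s) ^ 2 ≤ 1 / 4 := by
        rw [div_le_iff₀ (pow_pos (hDpos s) 2)]
        have hx : 0 ≤ p * Real.exp s := by positivity
        have hy : 0 ≤ 1 - p := by linarith
        have : (D s) ^ 2 = (p * Real.exp s + (1 - p)) ^ 2 := by simp [hDdef]
        nlinarith [sq_nonneg (p * Real.exp s - (1 - p))]
      linarith
  have hg0 : g 0 = 0 := by simp [hgdef, hDdef]
  set f : ℝ → ℝ := fun s => p * s + s ^ 2 / 8 - Real.log (D s) with hfdef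
  have hf : ∀ s, HasDerivAt f (g s) s := by
    intro s
    have h1 : HasDerivAt (fun s : ℝ => p * s + s ^ 2 / 8) (p + s / 4) s := by
      have := (((hasDerivAt_pow 2 s).div_const 8)).const_add (p * s)
      have h2 : HasDerivAt (fun s : ℝ => p * s) p s := by
        simpa using (hasDerivAt_id s).const_mul p
      refine (h2.add ((hasDerivAt_pow 2 s).div_const 8)).congr_deriv ?_
      push_cast; ring
    have h2 : HasDerivAt (fun s => Real.log (D s)) (p * Real.exp s / D s) s :=
      (hD s).log (ne_of_gt (hDpos s))
    exact h1.sub h2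
  have hfmono : MonotoneOn f (Set.Ici (0:ℝ)) := by
    apply monotoneOn_of_deriv_nonneg (convex_Ici 0)
    · exact (Differentiable.continuous (fun s => (hf s).differentiableAt)).continuousOn
    · intro s _; exact (hf s).differentiableAt.differentiableWithinAt
    · intro s hs
      rw [(hf s).deriv]
      rw [interior_Ici] at hs
      have := hgmono (le_of_lt hs)
      rw [hg0] at this; exact this
  have hf0 : f 0 = 0 := by simp [hfdef, hDdef]
  have hft : 0 ≤ f t := by
    have := hfmono (Set.mem_Ici.mpr le_rfl) (Set.mem_Ici.mpr ht) ht
    rw [hf0] at this; exact this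
  have : Real.log (D t) ≤ p * t + t ^ 2 / 8 := by simp only [hfdef] at hft; linarith
  have h5 : D t ≤ Real.exp (p * t + t ^ 2 / 8) := by
    calc D t = Real.exp (Real.log (D t)) := (Real.exp_log (hDpos t)).symm
      _ ≤ Real.exp (p * t + t ^ 2 / 8) := Real.exp_le_exp.mpr this
  simpa [hDdef] using h5


lemma shrink_aux {ι : Type*} [DecidableEq ι] (g : ι → ℝ) (c : ℝ) (a : ℕ) :
    ∀ d : ℕ, ∀ X : Finset ι, X.card = a + d → c * X.card ≤ ∑ i ∈ X, g i →
    ∃ S ⊆ X, S.card = a ∧ c * a ≤ ∑ i ∈ S, g i := by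
  intro d
  induction d with
  | zero => intro X hcard hsum
            exact ⟨X, subset_refl X, by simpa using hcard, by simpa [hcard] using hsum⟩
  | succ d ih =>
    intro X hcard hsum
    have hpos : 0 < X.card := by omega
    have hne : X.Nonempty := Finset.card_pos.mp hpos
    -- there is an element with g i ≤ average
    obtain ⟨i, hi, hgi⟩ : ∃ i ∈ X, g i ≤ (∑ j ∈ X, g j) / X.card := by
      by_contra hcon
      push_neg at hcon
      have := Finset.sum_lt_sum_of_nonempty hne (fun i hi => hcon i hi)
      rw [Finset.sum_const, nsmul_eq_mul] at this
      rw [mul_div_cancel₀ _ (by exact_mod_cast hpos.ne')] at this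
      exact lt_irrefl _ this
    set X' := X.erase i with hX'
    have hcard' : X'.card = a + d := by
      rw [hX', Finset.card_erase_of_mem hi]; omega
    have hsum' : c * X'.card ≤ ∑ j ∈ X', g j := by
      have hsplit : ∑ j ∈ X', g j = (∑ j ∈ X, g j) - g i := by
        rw [hX', Finset.sum_erase_eq_sub hi]
      have hk : (X.card : ℝ) = (a:ℝ) + d + 1 := by rw [hcard]; push_cast; ring
      have hkpos : (0:ℝ) < X.card := by exact_mod_cast hpos
      have havg : c ≤ (∑ j ∈ X, g j) / X.card := by
        rw [le_div_iff₀ hkpos]; linarith [hsum]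
      rw [hsplit, hcard']
      have : (X'.card : ℝ) = (X.card : ℝ) - 1 := by rw [hcard', hk]; push_cast; ring
      have h2 : g i ≤ (∑ j ∈ X, g j) / X.card := hgi
      have h3 : c * ((X.card : ℝ) - 1) ≤ (∑ j ∈ X, g j) - (∑ j ∈ X, g j) / X.card := by
        have := mul_le_mul_of_nonneg_left havg (le_of_lt hkpos)
        have hdiv : (X.card : ℝ) * ((∑ j ∈ X, g j) / X.card) = ∑ j ∈ X, g j := by
          field_simp
        nlinarith [havg, hkpos]
      have : ((a:ℝ) + d) = (X.card : ℝ) - 1 := by rw [hk]; push_cast; ring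
      push_cast
      rw [this]
      linarith
    obtain ⟨S, hS, hScard, hSsum⟩ := ih X' hcard' hsum'
    exact ⟨S, hS.trans (Finset.erase_subset i X), hScard, hSsum⟩

lemma shrink {ι : Type*} [DecidableEq ι] (g : ι → ℝ) (c : ℝ) (a : ℕ) (X : Finset ι)
    (ha : a ≤ X.card) (hsum : c * X.card ≤ ∑ i ∈ X, g i) :
    ∃ S ⊆ X, S.card = a ∧ c * a ≤ ∑ i ∈ S, g i := by
  obtain ⟨d, hd⟩ := Nat.exists_eq_add_of_le ha
  exact shrink_aux g c a d X hd hsum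

open MeasureTheory

open scoped Classical in
lemma pi_bernoulli_measure_eq {m n : ℕ} {p : ℝ} (hp0 : 0 ≤ p) (hp1 : p ≤ 1)
    (A : Set ((Fin m × Fin n) → Bool)) :
    (Measure.pi fun _ : Fin m × Fin n =>
      (PMF.bernoulli (Real.toNNReal p) (Real.toNNReal_le_one.mpr hp1)).toMeasure) A =
    ENNReal.ofReal (∑ ω ∈ Finset.univ.filter (· ∈ A),
      ∏ c : Fin m × Fin n, (if ω c then p else 1 - p)) := by
  classical
  set ν := (PMF.bernoulli (Real.toNNReal p) (Real.toNNReal_le_one.mpr hp1)).toMeasure with hν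
  set μ := Measure.pi fun _ : Fin m × Fin n => ν with hμ
  -- singleton measure
  have hsingle : ∀ ω : (Fin m × Fin n) → Bool,
      μ {ω} = ENNReal.ofReal (∏ c : Fin m × Fin n, (if ω c then p else 1 - p)) := by
    intro ω
    have h1 : ({ω} : Set ((Fin m × Fin n) → Bool)) = Set.pi Set.univ (fun c => {ω c}) := by
      rw [Set.univ_pi_singleton]
    rw [h1, Measure.pi_pi]
    have h2 : ∀ c : Fin m × Fin n, ν {ω c} = ENNReal.ofReal (if ω c then p else 1 - p) := by
      intro c
      rw [hν, PMF.toMeasure_apply_singleton _ _ (measurableSet_singleton _)]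
      rw [PMF.bernoulli_apply]
      cases h : ω c
      · show ((1 - p.toNNReal : NNReal) : ENNReal) = ENNReal.ofReal (1 - p)
        rw [ENNReal.coe_sub, ENNReal.coe_one, ENNReal.ofReal_sub _ hp0, ENNReal.ofReal_one, ENNReal.ofReal]
      · show ((p.toNNReal : NNReal) : ENNReal) = ENNReal.ofReal p
        rfl
    rw [Finset.prod_congr rfl (fun c _ => h2 c)]
    rw [← ENNReal.ofReal_prod_of_nonneg]
    intro c _
    cases h : ω c <;> simp [h] <;> linarith
  -- decompose A as finite union of singletons
  have hA : A = ⋃ ω ∈ (Finset.univ.filter (· ∈ A)), ({ω} : Set _) := by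
    ext ω; simp
  have hA' : μ A = ∑ ω ∈ Finset.univ.filter (· ∈ A), μ {ω} := by
    conv_lhs => rw [hA]
    exact measure_biUnion_finset
      (fun x _ y _ hxy => by simp [Set.disjoint_singleton, hxy])
      (fun ω _ => measurableSet_singleton ω)
  rw [hA', Finset.sum_congr rfl (fun ω _ => hsingle ω)]
  rw [← ENNReal.ofReal_sum_of_nonneg]
  intro ω _
  apply Finset.prod_nonneg
  intro c _
  cases h : ω c <;> simp [h] <;> linarith


open scoped Classical in
lemma chernoff_core {m n : ℕ} {p δ : ℝ} (hp0 : 0 ≤ p) (hp1 : p ≤ 1) (hδp : p ≤ δ)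
    (a b : ℕ) (S : Finset (Fin n)) (T : Finset (Fin m)) (hS : S.card = a) (hT : T.card = b) :
    ∑ ω ∈ Finset.univ.filter (fun ω : (Fin m × Fin n) → Bool =>
        (δ * a * b : ℝ) ≤ ∑ c ∈ T ×ˢ S, (if ω c then (1:ℝ) else 0)),
      ∏ c : Fin m × Fin n, (if ω c then p else 1 - p)
    ≤ Real.exp (-2 * a * b * (δ - p) ^ 2) := by
  classical
  set K := T ×ˢ S with hK
  have hKcard : K.card = b * a := by rw [hK, Finset.card_product, hS, hT]
  set t : ℝ := 4 * (δ - p) with htdef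
  have ht : 0 ≤ t := by rw [htdef]; linarith
  set χ : Bool → ℝ := fun x => if x then 1 else 0 with hχ
  set wt : Bool → ℝ := fun x => if x then p else 1 - p with hwt
  have hwt_nonneg : ∀ x, 0 ≤ wt x := by intro x; cases x <;> simp [hwt] <;> linarith
  set f : Fin m × Fin n → Bool → ℝ :=
    fun c x => wt x * (if c ∈ K then Real.exp (t * χ x) else 1) with hf
  have hf_nonneg : ∀ c x, 0 ≤ f c x := by
    intro c x
    apply mul_nonneg (hwt_nonneg x)
    split <;> positivity
  have hprod_f : ∀ ω : (Fin m × Fin n) → Bool,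
      (∏ c, f c (ω c)) =
      (∏ c, wt (ω c)) * Real.exp (t * ∑ c ∈ K, χ (ω c)) := by
    intro ω
    rw [hf]
    rw [Finset.prod_mul_distrib]
    congr 1
    rw [Finset.prod_ite_mem, Finset.univ_inter, Finset.mul_sum, Real.exp_sum]
  -- termwise bound on the filter
  have hterm : ∀ ω ∈ Finset.univ.filter (fun ω : (Fin m × Fin n) → Bool =>
        (δ * a * b : ℝ) ≤ ∑ c ∈ K, χ (ω c)),
      (∏ c : Fin m × Fin n, wt (ω c)) ≤
        Real.exp (-(t * (δ * a * b))) * ∏ c, f c (ω c) := by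
    intro ω hω
    rw [Finset.mem_filter] at hω
    rw [hprod_f, ← mul_assoc, mul_comm (Real.exp _) _, mul_assoc, ← Real.exp_add]
    have h1 : 0 ≤ -(t * (δ * a * b)) + t * ∑ c ∈ K, χ (ω c) := by
      have := mul_le_mul_of_nonneg_left hω.2 ht
      linarith
    have h2 : (1:ℝ) ≤ Real.exp (-(t * (δ * a * b)) + t * ∑ c ∈ K, χ (ω c)) := by
      rw [show (1:ℝ) = Real.exp 0 from (Real.exp_zero).symm]
      exact Real.exp_le_exp.mpr h1
    nlinarith [Finset.prod_nonneg (fun c (_ : c ∈ Finset.univ) => hwt_nonneg (ω c))]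
  -- factorization
  have hfact : ∑ ω : (Fin m × Fin n) → Bool, ∏ c, f c (ω c)
      = (p * Real.exp t + (1 - p)) ^ (b * a) := by
    rw [← Fintype.prod_sum f]
    have heval : ∀ c : Fin m × Fin n,
        (∑ x : Bool, f c x) = if c ∈ K then (p * Real.exp t + (1 - p)) else 1 := by
      intro c
      rw [Fintype.sum_bool, hf]
      by_cases hc : c ∈ K <;> simp [hc, hwt, hχ] <;> ring
    rw [Finset.prod_congr rfl (fun c _ => heval c)]
    rw [Finset.prod_ite_mem, Finset.univ_inter, Finset.prod_const, hKcard]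
  -- chain
  calc ∑ ω ∈ Finset.univ.filter (fun ω : (Fin m × Fin n) → Bool =>
        (δ * a * b : ℝ) ≤ ∑ c ∈ K, χ (ω c)),
      ∏ c : Fin m × Fin n, wt (ω c)
      ≤ ∑ ω ∈ Finset.univ.filter (fun ω : (Fin m × Fin n) → Bool =>
          (δ * a * b : ℝ) ≤ ∑ c ∈ K, χ (ω c)),
        Real.exp (-(t * (δ * a * b))) * ∏ c, f c (ω c) := Finset.sum_le_sum hterm
    _ ≤ ∑ ω : (Fin m × Fin n) → Bool,
        Real.exp (-(t * (δ * a * b))) * ∏ c, f c (ω c) :=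
        Finset.sum_le_sum_of_subset_of_nonneg (Finset.subset_univ _)
          (fun ω _ _ => mul_nonneg (le_of_lt (Real.exp_pos _))
            (Finset.prod_nonneg fun c _ => hf_nonneg c _))
    _ = Real.exp (-(t * (δ * a * b))) * ((p * Real.exp t + (1 - p)) ^ (b * a)) := by
        rw [← Finset.mul_sum, hfact]
    _ ≤ Real.exp (-(t * (δ * a * b))) * (Real.exp (p * t + t ^ 2 / 8)) ^ (b * a) := by
        apply mul_le_mul_of_nonneg_left _ (le_of_lt (Real.exp_pos _))
        apply pow_le_pow_left₀ _ (bernoulli_mgf_bound hp0 hp1 ht)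
        have := Real.exp_pos t
        nlinarith
    _ ≤ Real.exp (-2 * a * b * (δ - p) ^ 2) := by
        rw [← Real.exp_nat_mul, ← Real.exp_add, Real.exp_le_exp, htdef]
        have hba : ((b * a : ℕ) : ℝ) = (b : ℝ) * a := by push_cast; ring
        rw [hba]
        ring_nf
        nlinarith [sq_nonneg (δ - p)]


open MeasureTheory ProbabilityTheory

/-- Theorem 3.1 -/
theorem dense_tile_existence_bound (m n : ℕ) (p : ℝ) (hp0 : 0 ≤ p) (hp1 : p ≤ 1)
    (μ : Measure ((Fin m × Fin n) → Bool))
    (hμ : μ = Measure.pi fun _ =>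
      (PMF.bernoulli (Real.toNNReal p) (Real.toNNReal_le_one.mpr hp1)).toMeasure)
    (δ : ℝ) (hδp : p ≤ δ) (hδ1 : δ ≤ 1)
    (a b : ℕ) (ha : 1 ≤ a) (han : a ≤ n) (hb : 1 ≤ b) (hbm : b ≤ m) :
    μ {ω | ∃ (x : Fin n → Bool) (y : Fin m → Bool),
        a ≤ (Finset.univ.filter fun i => x i = true).card ∧
        b ≤ (Finset.univ.filter fun j => y j = true).card ∧
        δ * (Finset.univ.filter fun i => x i = true).card *
            (Finset.univ.filter fun j => y j = true).card ≤
          ∑ j, ∑ i, (if y j then (1 : ℝ) else 0) *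
            (if ω (j, i) then 1 else 0) * (if x i then 1 else 0)} ≤
      ENNReal.ofReal ((n.choose a : ℝ) * (m.choose b : ℝ) *
        Real.exp (-2 * a * b * (δ - p) ^ 2)) := by
  classical
  subst hμ
  set μ := Measure.pi fun _ : Fin m × Fin n =>
      (PMF.bernoulli (Real.toNNReal p) (Real.toNNReal_le_one.mpr hp1)).toMeasure with hμ
  set E : Set ((Fin m × Fin n) → Bool) := {ω | ∃ (x : Fin n → Bool) (y : Fin m → Bool),
        a ≤ (Finset.univ.filter fun i => x i = true).card ∧
        b ≤ (Finset.univ.filter fun j => y j = true).card ∧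
        δ * (Finset.univ.filter fun i => x i = true).card *
            (Finset.univ.filter fun j => y j = true).card ≤
          ∑ j, ∑ i, (if y j then (1 : ℝ) else 0) *
            (if ω (j, i) then 1 else 0) * (if x i then 1 else 0)} with hE
  set P : Finset (Finset (Fin n) × Finset (Fin m)) :=
    (Finset.powersetCard a Finset.univ) ×ˢ (Finset.powersetCard b Finset.univ) with hP
  set Ev : Finset (Fin n) × Finset (Fin m) → Set ((Fin m × Fin n) → Bool) :=
    fun q => {ω | (δ * a * b : ℝ) ≤ ∑ c ∈ q.2 ×ˢ q.1, (if ω c then (1:ℝ) else 0)} with hEv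
  -- Step 1: inclusion in the union
  have hsub : E ⊆ ⋃ q ∈ P, Ev q := by
    intro ω hω
    obtain ⟨x, y, hx, hy, hsum⟩ := hω
    set X := Finset.univ.filter fun i => x i = true with hX
    set Y := Finset.univ.filter fun j => y j = true with hY
    -- rewrite the sum
    have hrw : (∑ j, ∑ i, (if y j then (1 : ℝ) else 0) *
            (if ω (j, i) then 1 else 0) * (if x i then 1 else 0)) =
        ∑ j ∈ Y, ∑ i ∈ X, (if ω (j, i) then (1:ℝ) else 0) := by
      rw [hY, Finset.sum_filter]
      apply Finset.sum_congr rfl; intro j _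
      by_cases hyj : y j
      · simp only [hyj, if_true, one_mul]
        rw [hX, Finset.sum_filter]
        apply Finset.sum_congr rfl; intro i _
        by_cases hxi : x i <;> simp [hxi]
      · simp [hyj]
    rw [hrw] at hsum
    -- shrink columns
    have hcol : δ * (Y.card : ℝ) * (X.card : ℝ) ≤
        ∑ i ∈ X, ∑ j ∈ Y, (if ω (j, i) then (1:ℝ) else 0) := by
      rw [Finset.sum_comm]
      calc δ * (Y.card : ℝ) * (X.card : ℝ) = δ * X.card * Y.card := by ring
        _ ≤ _ := hsum
    obtain ⟨S, hSX, hScard, hSsum⟩ :=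
      shrink (fun i => ∑ j ∈ Y, (if ω (j, i) then (1:ℝ) else 0)) (δ * Y.card) a X hx hcol
    -- shrink rows
    have hrow : (δ * a : ℝ) * (Y.card : ℝ) ≤
        ∑ j ∈ Y, ∑ i ∈ S, (if ω (j, i) then (1:ℝ) else 0) := by
      rw [Finset.sum_comm]
      calc (δ * a : ℝ) * Y.card = δ * Y.card * a := by ring
        _ ≤ _ := hSsum
    obtain ⟨T, hTY, hTcard, hTsum⟩ :=
      shrink (fun j => ∑ i ∈ S, (if ω (j, i) then (1:ℝ) else 0)) (δ * a) b Y hy hrow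
    refine Set.mem_biUnion (show (S, T) ∈ P from ?_) ?_
    · rw [hP, Finset.mem_product]
      exact ⟨Finset.mem_powersetCard.mpr ⟨Finset.subset_univ _, hScard⟩,
        Finset.mem_powersetCard.mpr ⟨Finset.subset_univ _, hTcard⟩⟩
    · show (δ * a * b : ℝ) ≤ ∑ c ∈ T ×ˢ S, (if ω c then (1:ℝ) else 0)
      rw [Finset.sum_product]
      exact hTsum
  -- Step 2: union bound
  have hunion : μ E ≤ ∑ q ∈ P, μ (Ev q) :=
    (measure_mono hsub).trans (measure_biUnion_finset_le P Ev)
  -- Step 3: each event bound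
  have heach : ∀ q ∈ P, μ (Ev q) ≤ ENNReal.ofReal (Real.exp (-2 * a * b * (δ - p) ^ 2)) := by
    intro q hq
    rw [hP, Finset.mem_product] at hq
    obtain ⟨hq1, hq2⟩ := hq
    rw [Finset.mem_powersetCard] at hq1 hq2
    rw [hμ, pi_bernoulli_measure_eq hp0 hp1]
    apply ENNReal.ofReal_le_ofReal
    have hfe : (Finset.univ.filter (· ∈ Ev q)) =
        Finset.univ.filter (fun ω : (Fin m × Fin n) → Bool =>
          (δ * a * b : ℝ) ≤ ∑ c ∈ q.2 ×ˢ q.1, (if ω c then (1:ℝ) else 0)) := by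
      apply Finset.filter_congr
      intro ω _
      rw [hEv]
      simp [Set.mem_setOf_eq]
    rw [hfe]
    exact chernoff_core hp0 hp1 hδp a b q.1 q.2 hq1.2 hq2.2
  -- Step 4: combine
  calc μ E ≤ ∑ q ∈ P, μ (Ev q) := hunion
    _ ≤ ∑ _q ∈ P, ENNReal.ofReal (Real.exp (-2 * a * b * (δ - p) ^ 2)) :=
        Finset.sum_le_sum heach
    _ = (P.card : ENNReal) * ENNReal.ofReal (Real.exp (-2 * a * b * (δ - p) ^ 2)) := by
        rw [Finset.sum_const, nsmul_eq_mul]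
    _ ≤ ENNReal.ofReal ((n.choose a : ℝ) * (m.choose b : ℝ)
          * Real.exp (-2 * a * b * (δ - p) ^ 2)) := by
        have hPcard : P.card = n.choose a * m.choose b := by
          rw [hP, Finset.card_product, Finset.card_powersetCard, Finset.card_powersetCard,
            Finset.card_univ, Finset.card_univ, Fintype.card_fin, Fintype.card_fin]
        rw [hPcard]
        have hcast : ((n.choose a * m.choose b : ℕ) : ENNReal) =
            ENNReal.ofReal ((n.choose a : ℝ) * (m.choose b : ℝ)) := by
          rw [← ENNReal.ofReal_natCast (n.choose a * m.choose b)]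
          congr 1
          push_cast; ring
        rw [hcast, ← ENNReal.ofReal_mul (by positivity)]
end

section
/- Let D, M ∈ {0,1}^{m×n} be binary matrices and x ∈ {0,1}^n, y ∈ {0,1}^m binary vectors. Let A be the binary matrix with A_{ji} = M_{ji} ∨ (y_j x_i). Then |D − A| = |D − M| − yᵀ(D ∘ M̄)x + yᵀ(D̄ ∘ M̄)x, where M̄ = 1 − M and D̄ = 1 − D denote complements and ∘ the Hadamard product. -/
open Matrix

/-- Adding the tile `(x, y)` on top of the Boolean matrix `M` changes the
approximation error by `- yᵀ(D ∘ M̄)x + yᵀ(D̄ ∘ M̄)x`. -/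
theorem approx_error_add_tile (m n : ℕ)
    (D M : Matrix (Fin m) (Fin n) ℝ)
    (hD : ∀ j i, D j i = 0 ∨ D j i = 1) (hM : ∀ j i, M j i = 0 ∨ M j i = 1)
    (x : Fin n → ℝ) (y : Fin m → ℝ)
    (hx : ∀ i, x i = 0 ∨ x i = 1) (hy : ∀ j, y j = 0 ∨ y j = 1)
    (A : Matrix (Fin m) (Fin n) ℝ)
    (hA : ∀ j i, A j i = M j i + y j * x i * (1 - M j i)) :
    ∑ j, ∑ i, |D j i - A j i| =
      (∑ j, ∑ i, |D j i - M j i|)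
        - y ⬝ᵥ Matrix.mulVec (Matrix.of fun j i => D j i * (1 - M j i)) x
        + y ⬝ᵥ Matrix.mulVec (Matrix.of fun j i => (1 - D j i) * (1 - M j i)) x := by
  have key : ∀ j i, |D j i - A j i| =
      |D j i - M j i| - y j * (D j i * (1 - M j i) * x i)
        + y j * ((1 - D j i) * (1 - M j i) * x i) := by
    intro j i
    rcases hD j i with h1 | h1 <;> rcases hM j i with h2 | h2 <;>
      rcases hx i with h3 | h3 <;> rcases hy j with h4 | h4 <;>
      simp [hA, h1, h2, h3, h4]
  simp only [dotProduct, mulVec, Matrix.of_apply, Finset.mul_sum,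
    ← Finset.sum_sub_distrib, ← Finset.sum_add_distrib]
  exact Finset.sum_congr rfl fun j _ => Finset.sum_congr rfl fun i _ => key j i
end

section
/- Let D ∈ {0,1}^{m×n}, and let X ∈ {0,1}^{n×r}, Y ∈ {0,1}^{m×r} minimize L(X,Y) = |D − Y⊙Xᵀ| over all binary factor matrices of rank r, where (Y⊙Xᵀ)_{ji} = ⋁_{s=1}^r Y_{js}X_{is}. Fix s̃ ∈ {1,…,r}, let (x,y) = (X_{·s̃}, Y_{·s̃}) and let M be the Boolean product of all tiles except s̃, M_{ji} = ⋁_{s≠s̃} Y_{js}X_{is}. If yᵀM̄x > 0, then yᵀ(D ∘ M̄)x / (yᵀM̄x) ≥ 1/2. -/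
open Finset

/-- The Boolean matrix product of `Y` and `Xᵀ`. -/
def boolProd {m n r : ℕ} (Y : Matrix (Fin m) (Fin r) Bool)
    (X : Matrix (Fin n) (Fin r) Bool) : Matrix (Fin m) (Fin n) Bool :=
  fun j i => decide (∃ s, Y j s = true ∧ X i s = true)

/-- The approximation error `|D - Y ⊙ Xᵀ|`. -/
def bmfError {m n r : ℕ} (D : Matrix (Fin m) (Fin n) Bool)
    (X : Matrix (Fin n) (Fin r) Bool) (Y : Matrix (Fin m) (Fin r) Bool) : ℕ :=
  ((Finset.univ : Finset (Fin m × Fin n)).filter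
    fun ji => D ji.1 ji.2 ≠ boolProd Y X ji.1 ji.2).card

/-- For an optimal BMF, each tile is at least half dense in the data on the
area not covered by the other tiles. -/
theorem optimal_tile_half_dense_uncovered (m n r : ℕ)
    (D : Matrix (Fin m) (Fin n) Bool)
    (X : Matrix (Fin n) (Fin r) Bool) (Y : Matrix (Fin m) (Fin r) Bool)
    (hopt : ∀ (X' : Matrix (Fin n) (Fin r) Bool) (Y' : Matrix (Fin m) (Fin r) Bool),
      bmfError D X Y ≤ bmfError D X' Y')
    (st : Fin r)
    (M : Matrix (Fin m) (Fin n) Bool)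
    (hM : ∀ j i, M j i = decide (∃ s, s ≠ st ∧ Y j s = true ∧ X i s = true))
    (area : ℕ)
    (harea : area = ((Finset.univ : Finset (Fin m × Fin n)).filter
      fun ji => Y ji.1 st = true ∧ X ji.2 st = true ∧ M ji.1 ji.2 = false).card)
    (covered : ℕ)
    (hcovered : covered = ((Finset.univ : Finset (Fin m × Fin n)).filter
      fun ji => Y ji.1 st = true ∧ X ji.2 st = true ∧ M ji.1 ji.2 = false ∧
        D ji.1 ji.2 = true).card)
    (hpos : 0 < area) :
    (1 : ℝ) / 2 ≤ (covered : ℝ) / (area : ℝ) := by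
  set Y' : Matrix (Fin m) (Fin r) Bool := fun j s => if s = st then false else Y j s with hY'
  have hprodY' : ∀ j i, boolProd Y' X j i = M j i := by
    intro j i
    rw [hM, Bool.eq_iff_iff]
    simp only [boolProd, hY', decide_eq_true_eq]
    constructor
    · rintro ⟨s, hs1, hs2⟩
      by_cases h : s = st
      · simp [h] at hs1
      · exact ⟨s, h, by simpa [h] using hs1, hs2⟩
    · rintro ⟨s, hne, hs1, hs2⟩
      exact ⟨s, by simpa [hne] using hs1, hs2⟩
  have hprodY : ∀ j i, boolProd Y X j i = (M j i || (Y j st && X i st)) := by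
    intro j i
    rw [Bool.eq_iff_iff]
    simp only [boolProd, hM, Bool.or_eq_true, Bool.and_eq_true, decide_eq_true_eq]
    constructor
    · rintro ⟨s, hs1, hs2⟩
      by_cases h : s = st
      · subst h; exact Or.inr ⟨hs1, hs2⟩
      · exact Or.inl ⟨s, h, hs1, hs2⟩
    · rintro (⟨s, _, hs1, hs2⟩ | ⟨h1, h2⟩)
      · exact ⟨s, hs1, hs2⟩
      · exact ⟨st, h1, h2⟩
  have key : bmfError D X Y' + area = bmfError D X Y + 2 * covered := by
    rw [harea, hcovered]
    unfold bmfError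
    rw [Finset.card_filter, Finset.card_filter, Finset.card_filter, Finset.card_filter,
      Finset.mul_sum, ← Finset.sum_add_distrib, ← Finset.sum_add_distrib]
    apply Finset.sum_congr rfl
    intro ji _
    rw [hprodY ji.1 ji.2, hprodY' ji.1 ji.2]
    cases hd : D ji.1 ji.2 <;> cases hm : M ji.1 ji.2 <;> cases hy : Y ji.1 st <;>
      cases hx : X ji.2 st <;> simp [hd, hm, hy, hx]
  have hle : bmfError D X Y ≤ bmfError D X Y' := hopt X Y'
  have h2 : area ≤ 2 * covered := by omega
  have hA : (0 : ℝ) < (area : ℝ) := by exact_mod_cast hpos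
  rw [div_le_div_iff₀ (by norm_num) hA]
  have : (area : ℝ) ≤ 2 * covered := by exact_mod_cast h2
  linarith
end

section
/- Let B be an m×n random matrix with i.i.d. Bernoulli(p) entries, let n ≥ 2, μ > p², and set q = (n(n−1)/2)·exp(−(3/2)m(μ−p²)²/(2p²+μ)). If q < 1, then with probability at least 1 − q, every pair of distinct columns i ≠ k of B satisfies ⟨B_{·i}, B_{·k}⟩ < mμ; in particular the coherence of the column-normalized matrix (1/√m)B is less than μ whenever all columns are nonzero. -/
open Real Finset MeasureTheory ProbabilityTheory
open scoped ENNReal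


lemma exp_tsum (x : ℝ) : Real.exp x = ∑' n : ℕ, x ^ n / (Nat.factorial n) := by
  rw [Real.exp_eq_exp_ℝ, NormedSpace.exp_eq_tsum_div]

lemma fact_ge (n : ℕ) : 2 * 3 ^ n ≤ Nat.factorial (n + 2) := by
  induction n with
  | zero => simp [Nat.factorial]
  | succ k ih =>
    have h : Nat.factorial (k + 3) = (k + 3) * Nat.factorial (k + 2) := rfl
    rw [h]
    calc 2 * 3 ^ (k+1) = 3 * (2 * 3 ^ k) := by ring
    _ ≤ 3 * Nat.factorial (k+2) := by omega
    _ ≤ (k+3) * Nat.factorial (k+2) := by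
        have := Nat.factorial_pos (k+2); nlinarith

lemma exp_quad_bound {s : ℝ} (hs0 : 0 ≤ s) (hs3 : s < 3) :
    Real.exp s ≤ 1 + s + s ^ 2 / (2 * (1 - s / 3)) := by
  have hsum := Real.summable_pow_div_factorial s
  have hsum2 : Summable (fun n : ℕ => s ^ (n + 2) / (Nat.factorial (n + 2))) := by
    exact (summable_nat_add_iff 2).2 hsum
  have hgeom : Summable (fun n : ℕ => s ^ 2 / 2 * (s / 3) ^ n) := by
    apply Summable.mul_left
    exact summable_geometric_of_lt_one (by positivity) (by linarith)
  have hshift : Real.exp s = 1 + s + ∑' n : ℕ, s ^ (n + 2) / (Nat.factorial (n + 2)) := by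
    rw [exp_tsum]
    rw [Summable.tsum_eq_zero_add hsum]
    rw [Summable.tsum_eq_zero_add ((summable_nat_add_iff 1).2 hsum)]
    simp [Nat.factorial]
    ring
  rw [hshift]
  have hterm : ∀ n : ℕ, s ^ (n + 2) / (Nat.factorial (n + 2)) ≤ s ^ 2 / 2 * (s / 3) ^ n := by
    intro n
    have h1 : (2 * 3 ^ n : ℝ) ≤ (Nat.factorial (n + 2) : ℝ) := by exact_mod_cast fact_ge n
    have h2 : (0:ℝ) < 2 * 3 ^ n := by positivity
    have hnum : s ^ (n + 2) = s ^ 2 * s ^ n := by ring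
    rw [div_pow, hnum]
    rw [show s ^ 2 / 2 * (s ^ n / 3 ^ n) = s ^ 2 * s ^ n / (2 * 3 ^ n) by ring]
    exact div_le_div_of_nonneg_left (by positivity) h2 h1
  have hle := Summable.tsum_le_tsum hterm hsum2 hgeom
  have hg : ∑' n : ℕ, s ^ 2 / 2 * (s / 3) ^ n = s ^ 2 / 2 * (1 - s / 3)⁻¹ := by
    rw [tsum_mul_left, tsum_geometric_of_lt_one (by positivity) (by linarith)]
  rw [hg] at hle
  have h13 : 0 < 1 - s / 3 := by linarith
  calc 1 + s + ∑' n : ℕ, s ^ (n+2) / (Nat.factorial (n+2)) ≤ 1 + s + s ^ 2 / 2 * (1 - s/3)⁻¹ := by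
        linarith
  _ = 1 + s + s ^ 2 / (2 * (1 - s / 3)) := by
        have ha : (1 - s/3) ≠ 0 := ne_of_gt h13
        field_simp
        try ring

lemma key_real (r μ' : ℝ) (hr : 0 ≤ r) (ht : r < μ') :
    r * (Real.exp (3 * (μ' - r) / (2 * r + μ')) - 1)
      - 3 * (μ' - r) / (2 * r + μ') * μ' ≤ -(3/2) * (μ' - r) ^ 2 / (2 * r + μ') := by
  set t := μ' - r with htdef
  have ht0 : 0 < t := by simp [htdef]; linarith
  have hd : 0 < 2 * r + μ' := by linarith
  set s := 3 * t / (2 * r + μ') with hsdef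
  have hs0 : 0 ≤ s := by positivity
  rcases eq_or_lt_of_le hr with hr0 | hrpos
  · -- r = 0
    have hr0' : r = 0 := hr0.symm
    subst hr0'
    have hμ : μ' = t := by simp [htdef]
    have hs : s = 3 := by rw [hsdef, hμ]; field_simp; ring
    rw [hs, hμ]
    have hrhs : -(3/2) * t ^ 2 / (2 * 0 + t) = -(3/2) * t := by
      field_simp; ring
    rw [hrhs]
    nlinarith [Real.exp_pos 3, Real.add_one_le_exp (3:ℝ)]
  · have hs3 : s < 3 := by
      rw [hsdef, div_lt_iff₀ hd]
      have : 2 * r + μ' = 3 * r + t := by simp [htdef]; ring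
      nlinarith
    have hexp := exp_quad_bound hs0 hs3
    have h13 : (0:ℝ) < 1 - s / 3 := by linarith
    have hkey : r * (Real.exp s - 1) ≤ r * s + r * (s ^ 2 / (2 * (1 - s / 3))) := by
      nlinarith
    have hfrac : r * (s ^ 2 / (2 * (1 - s / 3))) = (3/2) * t ^ 2 / (2 * r + μ') := by
      rw [hsdef]
      have h1 : 1 - 3 * t / (2 * r + μ') / 3 = (2 * r + μ' - t) / (2 * r + μ') := by
        field_simp
      rw [h1]
      have h2 : 2 * r + μ' - t = 3 * r := by simp [htdef]; ring
      rw [h2]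
      field_simp
    have hst : s * μ' = s * r + 3 * t ^ 2 / (2 * r + μ') + s * t - 3 * t ^2 / (2 * r + μ') := by
      ring
    have hstv : s * t = 3 * t ^ 2 / (2 * r + μ') := by
      rw [hsdef]; field_simp
    calc r * (Real.exp s - 1) - s * μ'
        ≤ r * s + (3/2) * t ^ 2 / (2 * r + μ') - s * μ' := by rw [← hfrac]; linarith
      _ = r * s + (3/2) * t ^ 2 / (2 * r + μ') - s * (r + t) := by
          have : μ' = r + t := by simp [htdef]
          rw [this]
      _ = (3/2) * t ^ 2 / (2 * r + μ') - s * t := by ring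
      _ = -(3/2) * t ^ 2 / (2 * r + μ') := by rw [hstv]; ring


lemma sum_eval (m n : ℕ) (p a : ℝ) (i k : Fin n) (hik : i ≠ k) :
    ∑ ω : (Fin m × Fin n) → Bool,
      (∏ c, (if ω c then p else 1 - p)) *
        ∏ j : Fin m, (1 + a * ((if ω (j, i) then (1:ℝ) else 0) * (if ω (j, k) then 1 else 0)))
      = (1 + a * p ^ 2) ^ m := by
  have key : ∀ ω : (Fin m × Fin n) → Bool,
      (∏ c, (if ω c then p else 1 - p)) *
        ∏ j : Fin m, (1 + a * ((if ω (j, i) then (1:ℝ) else 0) * (if ω (j, k) then 1 else 0)))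
      = ∑ T ∈ (univ : Finset (Fin m)).powerset,
          a ^ T.card * ∏ c : Fin m × Fin n,
            ((if ω c then p else 1 - p) *
              (if c ∈ T ×ˢ ({i, k} : Finset (Fin n)) then (if ω c then (1:ℝ) else 0) else 1)) := by
    intro ω
    have hcomm : ∏ j : Fin m, (1 + a * ((if ω (j, i) then (1:ℝ) else 0) * (if ω (j, k) then 1 else 0)))
        = ∏ j : Fin m, ((a * ((if ω (j, i) then (1:ℝ) else 0) * (if ω (j, k) then 1 else 0))) + 1) :=
      Finset.prod_congr rfl fun j _ => add_comm _ _
    rw [hcomm, Finset.prod_add, Finset.mul_sum]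
    refine Finset.sum_congr rfl fun T hT => ?_
    have h0 : ∏ j ∈ T, (if ω (j, i) then (1:ℝ) else 0) * (if ω (j, k) then 1 else 0)
        = ∏ c ∈ T ×ˢ ({i, k} : Finset (Fin n)), (if ω c then (1:ℝ) else 0) := by
      have := Finset.prod_product' (s := T) (t := ({i, k} : Finset (Fin n)))
        (f := fun j l => if ω (j, l) then (1:ℝ) else 0)
      rw [this]
      refine Finset.prod_congr rfl fun j _ => (Finset.prod_pair (f := fun l => if ω (j, l) then (1:ℝ) else 0) hik).symm
    have h1 : ∏ j ∈ T, (a * ((if ω (j, i) then (1:ℝ) else 0) * (if ω (j, k) then 1 else 0)))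
        = a ^ T.card * ∏ c ∈ T ×ˢ ({i, k} : Finset (Fin n)), (if ω c then (1:ℝ) else 0) := by
      rw [Finset.prod_mul_distrib, Finset.prod_const, h0]
    have h2 : ∏ c ∈ T ×ˢ ({i, k} : Finset (Fin n)), (if ω c then (1:ℝ) else 0)
        = ∏ c : Fin m × Fin n, (if c ∈ T ×ˢ ({i, k} : Finset (Fin n)) then (if ω c then (1:ℝ) else 0) else 1) := by
      rw [Finset.prod_ite_mem, Finset.univ_inter]
    rw [Finset.prod_const_one, mul_one, h1, h2, Finset.prod_mul_distrib]
    ring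
  rw [Finset.sum_congr rfl fun ω _ => key ω, Finset.sum_comm]
  have inner : ∀ T : Finset (Fin m),
      ∑ ω : (Fin m × Fin n) → Bool, ∏ c : Fin m × Fin n,
        ((if ω c then p else 1 - p) *
          (if c ∈ T ×ˢ ({i, k} : Finset (Fin n)) then (if ω c then (1:ℝ) else 0) else 1))
      = (p ^ 2) ^ T.card := by
    intro T
    have hps := Finset.prod_univ_sum (fun _ : Fin m × Fin n => (univ : Finset Bool))
      (fun c b => (if b then p else 1 - p) *
        (if c ∈ T ×ˢ ({i, k} : Finset (Fin n)) then (if b then (1:ℝ) else 0) else 1))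
    rw [Fintype.piFinset_univ] at hps
    rw [← hps]
    have hb : ∀ c : Fin m × Fin n,
        (∑ b : Bool, ((if b then p else 1 - p) *
          (if c ∈ T ×ˢ ({i, k} : Finset (Fin n)) then (if b then (1:ℝ) else 0) else 1)))
        = (if c ∈ T ×ˢ ({i, k} : Finset (Fin n)) then p else 1) := by
      intro c
      by_cases hc : c ∈ T ×ˢ ({i, k} : Finset (Fin n)) <;> simp [hc] <;> ring
    rw [Finset.prod_congr rfl fun c _ => hb c]
    rw [Finset.prod_ite_mem, Finset.univ_inter, Finset.prod_const]
    rw [Finset.card_product, Finset.card_pair hik, mul_comm T.card 2, pow_mul]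
  have step : ∀ T ∈ (univ : Finset (Fin m)).powerset,
      (∑ ω : (Fin m × Fin n) → Bool, a ^ T.card * ∏ c : Fin m × Fin n,
        ((if ω c then p else 1 - p) *
          (if c ∈ T ×ˢ ({i, k} : Finset (Fin n)) then (if ω c then (1:ℝ) else 0) else 1)))
      = (∏ _j ∈ T, (a * p ^ 2)) * ∏ _j ∈ univ \ T, (1:ℝ) := by
    intro T _
    rw [← Finset.mul_sum, inner T, Finset.prod_const, Finset.prod_const_one, mul_one, ← mul_pow]
  rw [Finset.sum_congr rfl step, ← Finset.prod_add]
  rw [Finset.prod_const, Finset.card_univ, Fintype.card_fin, add_comm (a * p ^ 2) 1]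

lemma pair_chernoff (m n : ℕ) (p : ℝ) (hp0 : 0 ≤ p) (hp1 : p ≤ 1) (μ' : ℝ) (hμ' : p ^ 2 < μ')
    (i k : Fin n) (hik : i ≠ k) :
    ((Measure.pi fun _ : Fin m × Fin n =>
        (PMF.bernoulli (Real.toNNReal p) (Real.toNNReal_le_one.mpr hp1)).toMeasure)
      {ω | (m:ℝ) * μ' ≤ ∑ j, (if ω (j, i) then (1:ℝ) else 0) * (if ω (j, k) then 1 else 0)}).toReal
    ≤ Real.exp (-(3/2) * m * (μ' - p ^ 2) ^ 2 / (2 * p ^ 2 + μ')) := by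
  set ν := (PMF.bernoulli (Real.toNNReal p) (Real.toNNReal_le_one.mpr hp1)).toMeasure with hν
  set μm := Measure.pi fun _ : Fin m × Fin n => ν with hμm
  have hd : (0:ℝ) < 2 * p ^ 2 + μ' := by nlinarith [sq_nonneg p]
  set s := 3 * (μ' - p ^ 2) / (2 * p ^ 2 + μ') with hs
  have hs0 : 0 ≤ s := div_nonneg (by nlinarith) hd.le
  set X : ((Fin m × Fin n) → Bool) → ℝ :=
    fun ω => ∑ j, (if ω (j, i) then (1:ℝ) else 0) * (if ω (j, k) then 1 else 0) with hX
  have hint : Integrable (fun ω => Real.exp (s * X ω)) μm := .of_finite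
  have hmarkov := measure_ge_le_exp_mul_mgf (X := X) (μ := μm) ((m:ℝ) * μ') hs0 hint
  -- singleton measure
  have hsingle : ∀ ω : (Fin m × Fin n) → Bool,
      (μm {ω}).toReal = ∏ c, (if ω c then p else 1 - p) := by
    intro ω
    rw [← Set.univ_pi_singleton ω, hμm, Measure.pi_pi, ENNReal.toReal_prod]
    refine Finset.prod_congr rfl fun c _ => ?_
    have hsing : ν {ω c} = (PMF.bernoulli (Real.toNNReal p) (Real.toNNReal_le_one.mpr hp1)) (ω c) :=
      (PMF.bernoulli (Real.toNNReal p) (Real.toNNReal_le_one.mpr hp1)).toMeasure_apply_singleton (ω c) (measurableSet_singleton (ω c))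
    rw [hsing, PMF.bernoulli_apply]
    cases h : ω c
    · simp only [Bool.cond_false, Bool.false_eq_true, if_false]
      change (1 - ENNReal.ofReal p).toReal = 1 - p
      rw [← ENNReal.ofReal_one, ← ENNReal.ofReal_sub _ hp0,
        ENNReal.toReal_ofReal (by linarith)]
    · simp only [Bool.cond_true, if_true]
      exact ENNReal.toReal_ofReal hp0
  -- mgf value
  have hmgf : mgf X μm s = (1 + (Real.exp s - 1) * p ^ 2) ^ m := by
    rw [mgf, integral_fintype hint]
    have hexp : ∀ ω : (Fin m × Fin n) → Bool,
        Real.exp (s * X ω) = ∏ j : Fin m,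
          (1 + (Real.exp s - 1) * ((if ω (j, i) then (1:ℝ) else 0) * (if ω (j, k) then 1 else 0))) := by
      intro ω
      rw [hX, Finset.mul_sum, Real.exp_sum]
      refine Finset.prod_congr rfl fun j _ => ?_
      cases h1 : ω (j, i) <;> cases h2 : ω (j, k) <;> simp [h1, h2]
    calc ∑ ω : (Fin m × Fin n) → Bool, (μm {ω}).toReal • Real.exp (s * X ω)
        = ∑ ω : (Fin m × Fin n) → Bool, (∏ c, (if ω c then p else 1 - p)) *
            ∏ j : Fin m, (1 + (Real.exp s - 1) *
              ((if ω (j, i) then (1:ℝ) else 0) * (if ω (j, k) then 1 else 0))) := by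
          refine Finset.sum_congr rfl fun ω _ => ?_
          rw [smul_eq_mul, hsingle ω, hexp ω]
      _ = (1 + (Real.exp s - 1) * p ^ 2) ^ m := sum_eval m n p _ i k hik
  -- chain of bounds
  have h1exp : (1:ℝ) ≤ Real.exp s := Real.one_le_exp hs0
  have hbase : 0 ≤ 1 + (Real.exp s - 1) * p ^ 2 := by nlinarith [sq_nonneg p]
  have hpow : (1 + (Real.exp s - 1) * p ^ 2) ^ m ≤ Real.exp ((m:ℝ) * (p ^ 2 * (Real.exp s - 1))) := by
    rw [Real.exp_nat_mul, mul_comm (p^2)]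
    exact pow_le_pow_left₀ hbase (by linarith [Real.add_one_le_exp ((Real.exp s - 1) * p ^ 2)]) m
  have hkey := key_real (p ^ 2) μ' (sq_nonneg p) hμ'
  calc (μm {ω | (m:ℝ) * μ' ≤ X ω}).toReal
      ≤ Real.exp (-s * ((m:ℝ) * μ')) * mgf X μm s := hmarkov
    _ ≤ Real.exp (-s * ((m:ℝ) * μ')) * Real.exp ((m:ℝ) * (p ^ 2 * (Real.exp s - 1))) := by
        rw [hmgf]
        exact mul_le_mul_of_nonneg_left hpow (Real.exp_pos _).le
    _ = Real.exp ((m:ℝ) * (p ^ 2 * (Real.exp s - 1) - s * μ')) := by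
        rw [← Real.exp_add]; ring_nf
    _ ≤ Real.exp ((m:ℝ) * (-(3/2) * (μ' - p ^ 2) ^ 2 / (2 * p ^ 2 + μ'))) := by
        apply Real.exp_le_exp.mpr
        apply mul_le_mul_of_nonneg_left _ (Nat.cast_nonneg m)
        calc p ^ 2 * (Real.exp s - 1) - s * μ'
            = p ^ 2 * (Real.exp (3 * (μ' - p ^ 2) / (2 * p ^ 2 + μ')) - 1)
              - 3 * (μ' - p ^ 2) / (2 * p ^ 2 + μ') * μ' := by rw [← hs]
          _ ≤ -(3/2) * (μ' - p ^ 2) ^ 2 / (2 * p ^ 2 + μ') := hkey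
    _ = Real.exp (-(3/2) * m * (μ' - p ^ 2) ^ 2 / (2 * p ^ 2 + μ')) := by
        congr 1; field_simp


lemma card_lt_pairs (n : ℕ) :
    2 * ((univ : Finset (Fin n × Fin n)).filter fun q => q.1 < q.2).card + n = n * n := by
  set L := (univ : Finset (Fin n × Fin n)).filter fun q => q.1 < q.2 with hL
  set G := (univ : Finset (Fin n × Fin n)).filter fun q => q.2 < q.1 with hG
  have hcard : L.card = G.card := by
    apply Finset.card_bij (fun q _ => q.swap)
    · intro q hq; simp only [hL, hG, Finset.mem_filter, Finset.mem_univ, true_and] at *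
      exact hq
    · intro a ha b hb hab
      exact Prod.swap_injective hab
    · intro b hb
      refine ⟨b.swap, ?_, by simp⟩
      simp only [hL, hG, Finset.mem_filter, Finset.mem_univ, true_and] at *
      exact hb
  have hoff : (univ : Finset (Fin n)).offDiag.card = n * n - n := by
    rw [Finset.offDiag_card, Finset.card_univ, Fintype.card_fin]
  have hsplit : ((univ : Finset (Fin n)).offDiag.filter fun q => q.1 < q.2).card
      + ((univ : Finset (Fin n)).offDiag.filter fun q => ¬ q.1 < q.2).card
      = (univ : Finset (Fin n)).offDiag.card :=
    Finset.card_filter_add_card_filter_not _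
  have h1 : (univ : Finset (Fin n)).offDiag.filter (fun q => q.1 < q.2) = L := by
    ext q
    simp only [hL, Finset.mem_filter, Finset.mem_offDiag, Finset.mem_univ, true_and]
    exact ⟨fun h => h.2, fun h => ⟨ne_of_lt h, h⟩⟩
  have h2 : (univ : Finset (Fin n)).offDiag.filter (fun q => ¬ q.1 < q.2) = G := by
    ext q
    simp only [hG, Finset.mem_filter, Finset.mem_offDiag, Finset.mem_univ, true_and]
    constructor
    · rintro ⟨hne, hnlt⟩; exact hne.lt_or_gt.resolve_left hnlt
    · intro h; exact ⟨ne_of_gt h, not_lt.mpr h.le⟩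
  rw [h1, h2, ← hcard] at hsplit
  have hn : n ≤ n * n := by
    rcases Nat.eq_zero_or_pos n with h | h
    · simp [h]
    · exact Nat.le_mul_of_pos_left n h
  omega


/-- Complement form of the coherence bound: with probability at least `1 - q`,
every pair of distinct columns of the Bernoulli matrix has inner product less
than `m μ'`. -/
theorem coherence_bound_complement (m n : ℕ) (hn : 2 ≤ n) (p : ℝ)
    (hp0 : 0 ≤ p) (hp1 : p ≤ 1)
    (μ : Measure ((Fin m × Fin n) → Bool))
    (hμ : μ = Measure.pi fun _ =>
      (PMF.bernoulli (Real.toNNReal p) (Real.toNNReal_le_one.mpr hp1)).toMeasure)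
    (μ' : ℝ) (hμ' : p ^ 2 < μ') (q : ℝ)
    (hq : q = (n * (n - 1) / 2 : ℝ) *
      Real.exp (-(3 / 2) * m * (μ' - p ^ 2) ^ 2 / (2 * p ^ 2 + μ')))
    (hq1 : q < 1) :
    ENNReal.ofReal (1 - q) ≤
      μ {ω | ∀ i k : Fin n, i ≠ k →
        (∑ j, (if ω (j, i) then (1 : ℝ) else 0) * (if ω (j, k) then 1 else 0))
          < (m : ℝ) * μ'} := by
  subst hμ
  set μm := Measure.pi fun _ : Fin m × Fin n =>
    (PMF.bernoulli (Real.toNNReal p) (Real.toNNReal_le_one.mpr hp1)).toMeasure with hμm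
  haveI : IsProbabilityMeasure μm := by rw [hμm]; infer_instance
  set B := Real.exp (-(3 / 2) * m * (μ' - p ^ 2) ^ 2 / (2 * p ^ 2 + μ')) with hB
  have hB0 : 0 ≤ B := (Real.exp_pos _).le
  have hn1 : (1:ℝ) ≤ (n:ℝ) := by exact_mod_cast (le_trans (by norm_num) hn)
  have hq0 : 0 ≤ q := by
    rw [hq]
    apply mul_nonneg _ hB0
    apply div_nonneg (mul_nonneg (by linarith) (by linarith)) (by norm_num)
  set E := {ω : (Fin m × Fin n) → Bool | ∀ i k : Fin n, i ≠ k →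
      (∑ j, (if ω (j, i) then (1 : ℝ) else 0) * (if ω (j, k) then 1 else 0))
        < (m : ℝ) * μ'} with hE
  set Bad : Fin n × Fin n → Set ((Fin m × Fin n) → Bool) := fun q' =>
    {ω | (m:ℝ) * μ' ≤ ∑ j, (if ω (j, q'.1) then (1:ℝ) else 0) * (if ω (j, q'.2) then 1 else 0)}
    with hBad
  set L := (Finset.univ : Finset (Fin n × Fin n)).filter (fun q' => q'.1 < q'.2) with hL
  have hsub : Eᶜ ⊆ ⋃ q' ∈ L, Bad q' := by
    intro ω hω
    simp only [hE, Set.mem_compl_iff, Set.mem_setOf_eq] at hω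
    push_neg at hω
    obtain ⟨i, k, hik, hge⟩ := hω
    rcases hik.lt_or_gt with h | h
    · refine Set.mem_biUnion (show (i, k) ∈ L by simp [hL, h]) ?_
      exact hge
    · refine Set.mem_biUnion (show (k, i) ∈ L by simp [hL, h]) ?_
      show (m:ℝ) * μ' ≤ _
      calc (m:ℝ) * μ' ≤ ∑ j, (if ω (j, i) then (1:ℝ) else 0) * (if ω (j, k) then 1 else 0) :=
            hge
        _ = ∑ j, (if ω (j, k) then (1:ℝ) else 0) * (if ω (j, i) then 1 else 0) :=
            Finset.sum_congr rfl fun j _ => mul_comm _ _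
  have hcardL : (L.card : ℝ) = (n : ℝ) * ((n : ℝ) - 1) / 2 := by
    have h := card_lt_pairs n
    have h' : (2 : ℝ) * (L.card : ℝ) + (n : ℝ) = (n : ℝ) * (n : ℝ) := by
      exact_mod_cast h
    linarith
  have hEc : μm Eᶜ ≤ ENNReal.ofReal q := by
    calc μm Eᶜ ≤ μm (⋃ q' ∈ L, Bad q') := measure_mono hsub
      _ ≤ ∑ q' ∈ L, μm (Bad q') := measure_biUnion_finset_le _ _
      _ ≤ ∑ _q' ∈ L, ENNReal.ofReal B := by
          refine Finset.sum_le_sum fun q' hq' => ?_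
          have hik : q'.1 ≠ q'.2 := ne_of_lt (Finset.mem_filter.mp hq').2
          have hpc := pair_chernoff m n p hp0 hp1 μ' hμ' q'.1 q'.2 hik
          calc μm (Bad q') = ENNReal.ofReal ((μm (Bad q')).toReal) :=
                (ENNReal.ofReal_toReal (measure_ne_top _ _)).symm
            _ ≤ ENNReal.ofReal B := ENNReal.ofReal_le_ofReal hpc
      _ = (L.card : ℝ≥0∞) * ENNReal.ofReal B := by
          rw [Finset.sum_const, nsmul_eq_mul]
      _ = ENNReal.ofReal q := by
          rw [← ENNReal.ofReal_natCast, ← ENNReal.ofReal_mul (Nat.cast_nonneg _)]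
          congr 1
          rw [hcardL, hq]
  have hEm : MeasurableSet E := (Set.toFinite E).measurableSet
  have hcompl : μm (Eᶜᶜ) = 1 - μm Eᶜ := prob_compl_eq_one_sub hEm.compl
  rw [compl_compl] at hcompl
  calc ENNReal.ofReal (1 - q) = 1 - ENNReal.ofReal q := by
        rw [← ENNReal.ofReal_one, ← ENNReal.ofReal_sub _ hq0]
    _ ≤ 1 - μm Eᶜ := tsub_le_tsub_left hEc 1
    _ = μm E := hcompl.symm
end
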